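/- For every finite binary sequence d, every s with s(n) ∈ {0,…,b(n)−1} for n < |d|, every k ∈ ℕ, and every finite list r_0, …, r_{l−1} of LE-conditions in Q_{d,s,k}, there exists an LE-condition that is ≤ r_i in the extension order for every i < l. (That is, each Q_{d,s,k} is centered, and hence the poset LE_b is σ-centered.) -/

import Mathlib

open scoped Classical

/-- An LE-condition for the poset `LE_b`: a triple `(d, s, φ)` where `d` is a finite
binary sequence, `s n < b n` for `n < |d|`, `φ n ⊆ {0,…,b n − 1}`, and for some `k`,
`|φ n| ≤ b n · 2^{−n/2^k}` for all `n ≥ |d|`. -/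
structure LECond (b : ℕ → ℕ) where
  d : List Bool
  s : ℕ → ℕ
  φ : ℕ → Finset ℕ
  s_lt : ∀ n < d.length, s n < b n
  φ_sub : ∀ n, φ n ⊆ Finset.range (b n)
  bound : ∃ k : ℕ, ∀ n, d.length ≤ n →
    ((φ n).card : ℝ) ≤ (b n : ℝ) * (2 : ℝ) ^ (-(n : ℝ) / (2 : ℝ) ^ k)

/-- Membership in `Q_k`: the witness `k` works. -/
def LECond.inQ {b : ℕ → ℕ} (p : LECond b) (k : ℕ) : Prop :=
  ∀ n, p.d.length ≤ n →
    ((p.φ n).card : ℝ) ≤ (b n : ℝ) * (2 : ℝ) ^ (-(n : ℝ) / (2 : ℝ) ^ k)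

/-- Membership in `Q_{d,s,k}`: in `Q_k` with first two coordinates `d`, `s`. -/
def LECond.inQds {b : ℕ → ℕ} (p : LECond b) (d : List Bool) (s : ℕ → ℕ) (k : ℕ) : Prop :=
  p.d = d ∧ (∀ n < d.length, p.s n = s n) ∧ p.inQ k

/-- The extension order on LE-conditions: `q ≤ p`. -/
def LECond.le {b : ℕ → ℕ} (q p : LECond b) : Prop :=
  p.d <+: q.d ∧ (∀ n < p.d.length, q.s n = p.s n) ∧ (∀ n, p.φ n ⊆ q.φ n) ∧
  ∀ n, q.d.getD n false = true → ¬ (p.d.getD n false = true) → q.s n ∉ p.φ n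

/-- `d` is long for `k`: `|d| ≥ 2` and `2^{−n/2^k} ≤ 1/(n²(n+1)²)` for all `n ≥ |d|`. -/
def LongFor (k : ℕ) (d : List Bool) : Prop :=
  2 ≤ d.length ∧ ∀ n : ℕ, d.length ≤ n →
    (2 : ℝ) ^ (-(n : ℝ) / (2 : ℝ) ^ k) ≤ 1 / ((n : ℝ) ^ 2 * ((n : ℝ) + 1) ^ 2)


lemma getD_append_replicate_false (d : List Bool) (m n : ℕ) :
    (d ++ List.replicate m false).getD n false = d.getD n false := by
  by_cases h : n < d.length
  · rw [List.getD_append _ _ _ _ h]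
  · push_neg at h
    rw [List.getD_eq_default _ _ h]
    by_cases h2 : n < d.length + m
    · rw [List.getD_append_right _ _ _ _ h]
      · simp [List.getD, List.getElem?_replicate]
        split <;> rfl
    · push_neg at h2
      rw [List.getD_eq_default]
      simpa using h2

lemma key_ineq (k l n : ℕ) (hn : 2 ^ (k + 1) * l ≤ n) :
    (l : ℝ) * (2 : ℝ) ^ (-(n : ℝ) / (2 : ℝ) ^ k) ≤ (2 : ℝ) ^ (-(n : ℝ) / (2 : ℝ) ^ (k + 1)) := by
  have h2 : (0:ℝ) < 2 := by norm_num
  set y : ℝ := (n : ℝ) / (2 : ℝ) ^ (k + 1) with hy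
  have hpos : (0:ℝ) < (2:ℝ) ^ (k+1) := by positivity
  have hly : (l : ℝ) ≤ y := by
    rw [hy, le_div_iff₀ hpos]
    have : ((2 ^ (k+1) * l : ℕ) : ℝ) ≤ (n : ℝ) := by exact_mod_cast hn
    push_cast at this
    linarith
  have hsplit : -(n : ℝ) / (2 : ℝ) ^ k = (-y) + (-y) := by
    rw [hy]; field_simp; ring
  rw [hsplit, Real.rpow_add h2]
  have hA : (0:ℝ) < (2:ℝ) ^ (-y) := Real.rpow_pos_of_pos h2 _
  have h1 : (l : ℝ) * (2:ℝ) ^ (-y) ≤ 1 := by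
    rw [Real.rpow_neg (le_of_lt h2)]
    rw [mul_inv_le_iff₀' (Real.rpow_pos_of_pos h2 y), mul_one]
    calc (l : ℝ) ≤ (2:ℝ) ^ (l:ℕ) := by
            exact_mod_cast (Nat.lt_two_pow_self (n := l)).le
      _ = (2:ℝ) ^ ((l:ℕ):ℝ) := (Real.rpow_natCast 2 l).symm
      _ ≤ (2:ℝ) ^ y := Real.rpow_le_rpow_of_exponent_le (by norm_num) hly
  calc (l : ℝ) * ((2:ℝ) ^ (-y) * (2:ℝ) ^ (-y))
      = ((l : ℝ) * (2:ℝ) ^ (-y)) * (2:ℝ) ^ (-y) := by ring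
    _ ≤ 1 * (2:ℝ) ^ (-y) := by
        apply mul_le_mul_of_nonneg_right h1 hA.le
    _ = (2:ℝ) ^ (-(n : ℝ) / (2 : ℝ) ^ (k + 1)) := by rw [one_mul, hy, neg_div]

/-- Each `Q_{d,s,k}` is centered: any finitely many conditions `r 0, …, r (l−1)` in
`Q_{d,s,k}` have a common extension. Hence the poset `LE_b` is σ-centered. -/
theorem stmt7 (b : ℕ → ℕ) (hb : ∀ n, 2 ^ n ≤ b n)
    (d : List Bool) (s : ℕ → ℕ) (hs : ∀ n < d.length, s n < b n) (k : ℕ)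
    (l : ℕ) (r : ℕ → LECond b) (hr : ∀ i < l, (r i).inQds d s k) :
    ∃ q : LECond b, ∀ i < l, q.le (r i) := by
  classical
  set M := max d.length (2 ^ (k + 1) * l) with hM
  have hdM : d.length ≤ M := le_max_left _ _
  refine ⟨⟨d ++ List.replicate (M - d.length) false,
      fun n => if n < d.length then s n else 0,
      fun n => (Finset.range l).biUnion (fun i => (r i).φ n),
      ?_, ?_, ?_⟩, ?_⟩
  · intro n _
    by_cases h : n < d.length
    · simpa [h] using hs n h
    · simp only [h, if_false]
      exact lt_of_lt_of_le Nat.one_le_two_pow (hb n)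
  · intro n
    exact Finset.biUnion_subset.2 fun i _ => (r i).φ_sub n
  · refine ⟨k + 1, ?_⟩
    intro n hn
    have hlen : (d ++ List.replicate (M - d.length) false).length = M := by
      simp [Nat.add_sub_cancel' hdM]
    rw [hlen] at hn
    have hn2 : 2 ^ (k + 1) * l ≤ n := le_trans (le_max_right _ _) hn
    have hcard : ((((Finset.range l).biUnion fun i => (r i).φ n).card : ℝ))
        ≤ (l : ℝ) * ((b n : ℝ) * (2 : ℝ) ^ (-(n : ℝ) / (2 : ℝ) ^ k)) := by
      calc (((Finset.range l).biUnion fun i => (r i).φ n).card : ℝ)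
          ≤ ((∑ i ∈ Finset.range l, ((r i).φ n).card : ℕ) : ℝ) := by
            exact_mod_cast Finset.card_biUnion_le
        _ = ∑ i ∈ Finset.range l, (((r i).φ n).card : ℝ) := by push_cast; ring
        _ ≤ ∑ i ∈ Finset.range l, ((b n : ℝ) * (2 : ℝ) ^ (-(n : ℝ) / (2 : ℝ) ^ k)) := by
            apply Finset.sum_le_sum
            intro i hi
            rw [Finset.mem_range] at hi
            obtain ⟨hd1, _, hQ⟩ := hr i hi
            exact hQ n (by rw [hd1]; exact le_trans hdM hn)
        _ = (l : ℝ) * ((b n : ℝ) * (2 : ℝ) ^ (-(n : ℝ) / (2 : ℝ) ^ k)) := by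
            rw [Finset.sum_const, Finset.card_range, nsmul_eq_mul]
    calc ((((Finset.range l).biUnion fun i => (r i).φ n).card : ℝ))
        ≤ (l : ℝ) * ((b n : ℝ) * (2 : ℝ) ^ (-(n : ℝ) / (2 : ℝ) ^ k)) := hcard
      _ = (b n : ℝ) * ((l : ℝ) * (2 : ℝ) ^ (-(n : ℝ) / (2 : ℝ) ^ k)) := by ring
      _ ≤ (b n : ℝ) * (2 : ℝ) ^ (-(n : ℝ) / (2 : ℝ) ^ (k + 1)) := by
          apply mul_le_mul_of_nonneg_left (key_ineq k l n hn2) (by positivity)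
  · intro i hi
    obtain ⟨hd1, hs1, _⟩ := hr i hi
    refine ⟨?_, ?_, ?_, ?_⟩
    · rw [hd1]; exact List.prefix_append _ _
    · intro n hn
      rw [hd1] at hn
      simp only [hn, if_true]
      exact (hs1 n hn).symm
    · intro n
      exact Finset.subset_biUnion_of_mem (fun j => (r j).φ n) (Finset.mem_range.2 hi)
    · intro n h1 h2
      exfalso
      apply h2
      rw [hd1]
      rw [getD_append_replicate_false] at h1
      exact h1
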